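/- arXiv:0907.2361 — 5 statements merged into one kernel-verified Lean document; each statement's English description precedes it below -/
import Mathlib

section
/- Let (C, J) be a small site and let l : C → Sh(C, J) be the composite of the Yoneda embedding with sheafification. For an object c of C, a sieve R on l(c) in Sh(C, J) is (jointly) epimorphic if and only if the sieve {f : d → c in C | l(f) ∈ R} is J-covering. -/
open CategoryTheory Limits

universe u

/-- A sieve on an object of a category is epimorphic if its morphisms form a jointly
epimorphic family. -/
def EpimorphicSieve {E : Type*} [Category E] {A : E} (S : Sieve A) : Prop :=
  ∀ ⦃Z : E⦄ (g h : A ⟶ Z), (∀ ⦃Y : E⦄ (f : Y ⟶ A), S f → f ≫ g = f ≫ h) → g = h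

namespace EpiSieveAux

open Opposite

variable {C : Type u} [SmallCategory C] (J : GrothendieckTopology C)

/-- The equivalence between maps `l(c) ⟶ Z` in sheaves and sections of `Z` over `c`. -/
noncomputable def e (c : C) (Z : Sheaf J (Type u)) :
    ((yoneda ⋙ presheafToSheaf J (Type u)).obj c ⟶ Z) ≃ Z.val.obj (op c) :=
  ((sheafificationAdjunction J (Type u)).homEquiv (yoneda.obj c) Z).trans yonedaEquiv

lemma e_naturality_left {c d : C} (f : d ⟶ c) {Z : Sheaf J (Type u)}
    (g : (yoneda ⋙ presheafToSheaf J (Type u)).obj c ⟶ Z) :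
    e J d Z ((yoneda ⋙ presheafToSheaf J (Type u)).map f ≫ g) = Z.val.map f.op (e J c Z g) := by
  show yonedaEquiv (((sheafificationAdjunction J (Type u)).homEquiv (yoneda.obj d) Z)
      ((presheafToSheaf J (Type u)).map (yoneda.map f) ≫ g)) =
    Z.val.map f.op (yonedaEquiv
      (((sheafificationAdjunction J (Type u)).homEquiv (yoneda.obj c) Z) g))
  rw [Adjunction.homEquiv_naturality_left, yonedaEquiv_naturality]


lemma e_naturality_right {d : C} {W Z : Sheaf J (Type u)}
    (α : (yoneda ⋙ presheafToSheaf J (Type u)).obj d ⟶ W) (β : W ⟶ Z) :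
    e J d Z (α ≫ β) = β.hom.app (op d) (e J d W α) := by
  show yonedaEquiv (((sheafificationAdjunction J (Type u)).homEquiv (yoneda.obj d) Z) (α ≫ β)) =
    β.hom.app (op d) (yonedaEquiv
      (((sheafificationAdjunction J (Type u)).homEquiv (yoneda.obj d) W) α))
  rw [Adjunction.homEquiv_naturality_right, yonedaEquiv_comp]
  rfl

lemma e_map {c d : C} (f : d ⟶ c) :
    e J d _ ((yoneda ⋙ presheafToSheaf J (Type u)).map f) =
      (toSheafify J (yoneda.obj c)).app (op d) f := by
  show yonedaEquiv (((sheafificationAdjunction J (Type u)).homEquiv (yoneda.obj d) _)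
      ((presheafToSheaf J (Type u)).map (yoneda.map f))) = _
  rw [show (presheafToSheaf J (Type u)).map (yoneda.map f) =
      (presheafToSheaf J (Type u)).map (yoneda.map f) ≫ 𝟙 _ from (Category.comp_id _).symm,
    Adjunction.homEquiv_naturality_left, Adjunction.homEquiv_id, yonedaEquiv_comp,
    yonedaEquiv_yoneda_map]

/-- The sheaf of closed sieves. -/
noncomputable def ZJ : Sheaf J (Type u) :=
  ⟨(Functor.closedSieves J).toFunctor, (isSheaf_iff_isSheaf_of_type J _).2 (classifier_isSheaf J)⟩

lemma covering_of_epimorphicSieve (c : C)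
    (R : Sieve ((yoneda ⋙ presheafToSheaf J (Type u)).obj c)) (hepi : EpimorphicSieve R) :
    R.functorPullback (yoneda ⋙ presheafToSheaf J (Type u)) ∈ J c := by
  let S : Sieve c := R.functorPullback (yoneda ⋙ presheafToSheaf J (Type u))
  let g : (yoneda ⋙ presheafToSheaf J (Type u)).obj c ⟶ ZJ J :=
    (e J c (ZJ J)).symm ⟨J.close S, J.close_isClosed S⟩
  let h : (yoneda ⋙ presheafToSheaf J (Type u)).obj c ⟶ ZJ J :=
    (e J c (ZJ J)).symm ⟨(⊤ : Sieve c), fun _ _ _ => trivial⟩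
  -- key claim : for any `χ : l(d) ⟶ l(c)` in `R`, `χ ≫ g = χ ≫ h`.
  have key : ∀ (d : C) (χ : (yoneda ⋙ presheafToSheaf J (Type u)).obj d ⟶
      (yoneda ⋙ presheafToSheaf J (Type u)).obj c), R χ → χ ≫ g = χ ≫ h := by
    intro d χ hχ
    apply (e J d (ZJ J)).injective
    -- the element of the sheafification corresponding to χ
    have hT := Presheaf.imageSieve_mem J (toSheafify J (yoneda.obj c))
      (e J d ((yoneda ⋙ presheafToSheaf J (Type u)).obj c) χ)
    refine ((classifier_isSheaf J _ hT).isSeparatedFor).ext ?_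
    rintro d' k ⟨f, hf⟩
    -- `l(k) ≫ χ = l(f)`
    have hrestr : (yoneda ⋙ presheafToSheaf J (Type u)).map k ≫ χ =
        (yoneda ⋙ presheafToSheaf J (Type u)).map f := by
      apply (e J d' ((yoneda ⋙ presheafToSheaf J (Type u)).obj c)).injective
      rw [e_naturality_left, e_map]
      exact hf.symm
    have hfS : S f := by
      show R ((yoneda ⋙ presheafToSheaf J (Type u)).map f)
      rw [← hrestr]
      exact R.downward_closed hχ ((yoneda ⋙ presheafToSheaf J (Type u)).map k)
    -- now compute both sides
    have lhs : (ZJ J).val.map k.op (e J d (ZJ J) (χ ≫ g)) =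
        (ZJ J).val.map f.op (⟨J.close S, J.close_isClosed S⟩ :
          {T : Sieve c // J.IsClosed T}) := by
      rw [← e_naturality_left, ← Category.assoc, hrestr, e_naturality_left]
      show (ZJ J).val.map f.op (e J c (ZJ J) ((e J c (ZJ J)).symm _)) = _
      exact congrArg _ (Equiv.apply_symm_apply _ _)
    have rhs : (ZJ J).val.map k.op (e J d (ZJ J) (χ ≫ h)) =
        (ZJ J).val.map f.op (⟨⊤, fun _ _ _ => trivial⟩ :
          {T : Sieve c // J.IsClosed T}) := by
      rw [← e_naturality_left, ← Category.assoc, hrestr, e_naturality_left]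
      show (ZJ J).val.map f.op (e J c (ZJ J) ((e J c (ZJ J)).symm _)) = _
      exact congrArg _ (Equiv.apply_symm_apply _ _)
    show (ZJ J).val.map k.op (e J d (ZJ J) (χ ≫ g)) =
      (ZJ J).val.map k.op (e J d (ZJ J) (χ ≫ h))
    rw [lhs, rhs]
    apply Subtype.ext
    show (J.close S).pullback f = (⊤ : Sieve c).pullback f
    rw [Sieve.pullback_top, ← J.pullback_close, Sieve.pullback_eq_top_of_mem S hfS,
      J.close_eq_top_iff_mem]
    exact J.top_mem d'
  -- from the key claim, conclude `g = h` using epimorphicity of `R`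
  have ghyp : g = h := by
    apply hepi
    intro W φ hφ
    -- check equality of sheaf morphisms sectionwise
    apply Sheaf.hom_ext
    ext dop w
    induction dop using Opposite.rec with
    | op d =>
      have h1 : (φ ≫ g).hom.app (op d) w =
          e J d (ZJ J) ((e J d W).symm w ≫ (φ ≫ g)) := by
        rw [e_naturality_right, Equiv.apply_symm_apply]
      have h2 : (φ ≫ h).hom.app (op d) w =
          e J d (ZJ J) ((e J d W).symm w ≫ (φ ≫ h)) := by
        rw [e_naturality_right, Equiv.apply_symm_apply]
      show (φ ≫ g).hom.app (op d) w = (φ ≫ h).hom.app (op d) w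
      rw [h1, h2, ← Category.assoc, ← Category.assoc]
      congr 1
      exact key d ((e J d W).symm w ≫ φ) (R.downward_closed hφ ((e J d W).symm w))
  -- `g = h` gives `J.close S = ⊤`, hence `S ∈ J c`
  have heq : (⟨J.close S, J.close_isClosed S⟩ : {T : Sieve c // J.IsClosed T}) =
      ⟨⊤, fun _ _ _ => trivial⟩ := by
    have := congrArg (e J c (ZJ J)) ghyp
    exact (Equiv.apply_symm_apply _ _).symm.trans (this.trans (Equiv.apply_symm_apply _ _))
  have := congrArg Subtype.val heq
  rw [← J.close_eq_top_iff_mem]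
  exact this

lemma epimorphicSieve_of_covering (c : C)
    (R : Sieve ((yoneda ⋙ presheafToSheaf J (Type u)).obj c))
    (hScov : R.functorPullback (yoneda ⋙ presheafToSheaf J (Type u)) ∈ J c) :
    EpimorphicSieve R := by
  intro Z g h hagree
  apply (e J c Z).injective
  have hsep : Presieve.IsSeparatedFor Z.val
      ((R.functorPullback (yoneda ⋙ presheafToSheaf J (Type u))) : Presieve c) :=
    (((isSheaf_iff_isSheaf_of_type J _).1 Z.cond) _ hScov).isSeparatedFor
  refine hsep.ext ?_
  intro d f hf
  rw [← e_naturality_left, ← e_naturality_left]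
  congr 1
  exact hagree ((yoneda ⋙ presheafToSheaf J (Type u)).map f) hf

end EpiSieveAux

/-- For `l : C ⥤ Sh(C, J)` the composite of Yoneda with sheafification, a sieve `R` on
`l(c)` is epimorphic iff the sieve `{f : d ⟶ c | l(f) ∈ R}` is `J`-covering. -/
theorem epimorphicSieve_iff_pullback_covering (C : Type u) [SmallCategory C]
    (J : GrothendieckTopology C) (c : C)
    (R : Sieve ((yoneda ⋙ presheafToSheaf J (Type u)).obj c)) :
    EpimorphicSieve R ↔ R.functorPullback (yoneda ⋙ presheafToSheaf J (Type u)) ∈ J c :=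
  ⟨EpiSieveAux.covering_of_epimorphicSieve J c R, EpiSieveAux.epimorphicSieve_of_covering J c R⟩
end

section
/- Let (C, J) be a small site. For an object c of C, the object l(c) = a_J(y(c)) of Sh(C, J) is compact if and only if every J-covering sieve on c contains a finite family of morphisms generating a J-covering sieve. -/
open CategoryTheory Limits

universe u

/-- A family of morphisms into `A` is jointly epimorphic. -/
def JointlyEpic {E : Type*} [Category E] {ι : Type*} {A : E} {Y : ι → E}
    (f : ∀ i, Y i ⟶ A) : Prop :=
  ∀ ⦃Z : E⦄ (g h : A ⟶ Z), (∀ i, f i ≫ g = f i ≫ h) → g = h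

/-- An object is compact if every small jointly epimorphic family over it contains a
finite jointly epimorphic subfamily. -/
def CompactObj {C : Type u} [SmallCategory C] {J : GrothendieckTopology C}
    (A : Sheaf J (Type u)) : Prop :=
  ∀ ⦃ι : Type u⦄ (Y : ι → Sheaf J (Type u)) (f : ∀ i, Y i ⟶ A),
    JointlyEpic f → ∃ s : Finset ι, JointlyEpic fun i : s => f i

namespace CompactAux

open CategoryTheory GrothendieckTopology Opposite

variable {C : Type u} [SmallCategory C] (J : GrothendieckTopology C)

/-- `l(c)`, the sheafified representable. -/
noncomputable abbrev lc (c : C) : Sheaf J (Type u) :=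
  (presheafToSheaf J (Type u)).obj (yoneda.obj c)

/-- The canonical section of `l(c)` over `c`. -/
noncomputable def u0 (c : C) : (lc J c).val.obj (op c) :=
  (CategoryTheory.toSheafify J (yoneda.obj c)).app (op c) (𝟙 c)

lemma map_u0 (c : C) {d : C} (g : d ⟶ c) :
    (lc J c).val.map g.op (u0 J c) = (CategoryTheory.toSheafify J (yoneda.obj c)).app (op d) g := by
  have h := (FunctorToTypes.naturality (CategoryTheory.toSheafify J (yoneda.obj c)) g.op (𝟙 c)).symm
  simpa [u0] using h

/-- The sieve of arrows `g : d ⟶ c` such that the section `u0|g` of `l(c)` lifts through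
some member of the family `f`. -/
def jointSieve {c : C} {ι : Type*} {Y : ι → Sheaf J (Type u)}
    (f : ∀ i, Y i ⟶ lc J c) : Sieve c where
  arrows d g := ∃ (i : ι) (t : (Y i).val.obj (op d)),
    (f i).hom.app (op d) t = (lc J c).val.map g.op (u0 J c)
  downward_closed := by
    rintro d e g ⟨i, t, ht⟩ h
    refine ⟨i, (Y i).val.map h.op t, ?_⟩
    rw [FunctorToTypes.naturality, ht, ← FunctorToTypes.map_comp_apply, ← op_comp]

lemma hom_ext {c : C} {Z : Sheaf J (Type u)} {g h : lc J c ⟶ Z}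
    (e : g.hom.app (op c) (u0 J c) = h.hom.app (op c) (u0 J c)) : g = h := by
  apply ((sheafificationAdjunction J (Type u)).homEquiv (yoneda.obj c) Z).injective
  apply yonedaEquiv.injective
  rw [Adjunction.homEquiv_unit, Adjunction.homEquiv_unit]
  simpa [CategoryTheory.yonedaEquiv_apply, u0] using e

/-- If the joint image sieve covers, the family is jointly epic. -/
lemma jointlyEpic_of_mem {c : C} {ι : Type*} {Y : ι → Sheaf J (Type u)}
    (f : ∀ i, Y i ⟶ lc J c) (hf : jointSieve J f ∈ J c) : JointlyEpic f := by
  intro Z g h hgh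
  apply hom_ext J
  have hZ : Presieve.IsSheaf J Z.val := (isSheaf_iff_isSheaf_of_type J Z.val).1 Z.cond
  refine ((hZ _ hf).isSeparatedFor).ext ?_
  rintro d φ ⟨i, t, ht⟩
  have e1 := FunctorToTypes.naturality g.hom φ.op (u0 J c)
  have e2 := FunctorToTypes.naturality h.hom φ.op (u0 J c)
  rw [← e1, ← e2, ← ht]
  have e3 := congrArg (fun k => k.hom) (hgh i)
  have e4 := types_congr_hom (congrFun (congrArg NatTrans.app e3) (op d)) t
  simpa using e4

/-- The subobject classifier of sheaves: closed sieves. -/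
noncomputable def Omega : Sheaf J (Type u) :=
  ⟨(Functor.closedSieves J).toFunctor, by
    rw [isSheaf_iff_isSheaf_of_type]; exact classifier_isSheaf J⟩

/-- The map classifying the maximal subobject. -/
noncomputable def chiTop (c : C) : lc J c ⟶ Omega J :=
  ⟨{ app := fun d => TypeCat.ofHom fun _ => ⟨(⊤ : Sieve d.unop), fun _ _ _ => trivial⟩
     naturality := by
       intro d e h
       ext x
       exact Subtype.ext (Sieve.pullback_top (f := h.unop)).symm }⟩

/-- The classifying map `y(c) ⟶ Ω` of the closure of a sieve `R`. -/
noncomputable def yhat {c : C} (R : Sieve c) : yoneda.obj c ⟶ (Omega J).val where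
  app d := TypeCat.ofHom fun g => ⟨(J.close R).pullback g, J.isClosed_pullback _ _ (J.close_isClosed R)⟩
  naturality d e h := by
    ext g
    exact Subtype.ext (Sieve.pullback_comp (f := g) (g := h.unop) (J.close R))

/-- The classifying map `l(c) ⟶ Ω` of the closure of a sieve `R`. -/
noncomputable def chiR {c : C} (R : Sieve c) : lc J c ⟶ Omega J :=
  ((sheafificationAdjunction J (Type u)).homEquiv (yoneda.obj c) (Omega J)).symm (yhat J R)

lemma chiR_comm {c : C} (R : Sieve c) :
    CategoryTheory.toSheafify J (yoneda.obj c) ≫ (chiR J R).hom = yhat J R := by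
  have := ((sheafificationAdjunction J (Type u)).homEquiv (yoneda.obj c)
    (Omega J)).apply_symm_apply (yhat J R)
  rw [Adjunction.homEquiv_unit] at this
  exact this

/-- Jointly epic families have covering joint image sieves. -/
lemma mem_of_jointlyEpic {c : C} {ι : Type u} {Y : ι → Sheaf J (Type u)}
    (f : ∀ i, Y i ⟶ lc J c) (hf : JointlyEpic f) : jointSieve J f ∈ J c := by
  set R := jointSieve J f with hRdef
  have key : ∀ i, f i ≫ chiR J R = f i ≫ chiTop J c := by
    intro i
    refine Sheaf.hom_ext ?_
    apply NatTrans.ext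
    funext d; ext t
    show (chiR J R).hom.app d ((f i).hom.app d t) = ⟨(⊤ : Sieve d.unop), fun _ _ _ => trivial⟩
    set s := (f i).hom.app d t with hs
    apply Subtype.ext
    set St : Sieve d.unop := ((chiR J R).hom.app d s).1 with hSt
    show St = ⊤
    have hT : Presheaf.imageSieve (CategoryTheory.toSheafify J (yoneda.obj c)) s ∈ J d.unop :=
      Presheaf.imageSieve_mem J (CategoryTheory.toSheafify J (yoneda.obj c)) s
    have hle : Presheaf.imageSieve (CategoryTheory.toSheafify J (yoneda.obj c)) s ≤ St := by
      rintro e h ⟨g', hg'⟩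
      have hg'' : (CategoryTheory.toSheafify J (yoneda.obj c)).app (op e) g'
          = (lc J c).val.map h.op s := hg'
      have hnat := FunctorToTypes.naturality (chiR J R).hom h.op s
      rw [← hg''] at hnat
      have hcomm := types_congr_hom (congrFun (congrArg NatTrans.app (chiR_comm J R)) (op e)) g'
      simp only [NatTrans.comp_app, types_comp_apply] at hcomm
      rw [hcomm] at hnat
      have hginR : R g' := by
        refine ⟨i, (Y i).val.map h.op t, ?_⟩
        rw [FunctorToTypes.naturality, ← hs, map_u0]
        exact hg''.symm
      have hpull : St.pullback h = (J.close R).pullback g' := by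
        have := congrArg Subtype.val hnat
        exact this.symm
      rw [Sieve.mem_iff_pullback_eq_top, hpull]
      exact Sieve.pullback_eq_top_of_mem _ (J.le_close R _ hginR)
    have hStmem : St ∈ J d.unop := J.superset_covering hle hT
    have hcl : J.IsClosed St := ((chiR J R).hom.app d s).2
    ext e g
    simp only [Sieve.top_apply, iff_true]
    exact hcl g (J.pullback_stable g hStmem)
  have hchis := hf _ _ key
  have := types_congr_hom (congrFun (congrArg NatTrans.app
    (congrArg (fun k => k.hom) hchis)) (op c)) (u0 J c)
  have hcomm := types_congr_hom (congrFun (congrArg NatTrans.app (chiR_comm J R)) (op c)) (𝟙 c)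
  simp only [NatTrans.comp_app, types_comp_apply] at hcomm
  rw [show (chiR J R).hom.app (op c) (u0 J c) = (yhat J R).app (op c) (𝟙 c) from hcomm ▸ rfl]
    at this
  have hclose : (J.close R).pullback (𝟙 c) = ⊤ := congrArg Subtype.val this
  rw [Sieve.pullback_id] at hclose
  exact (J.close_eq_top_iff_mem R).1 hclose

end CompactAux

open CompactAux CategoryTheory GrothendieckTopology Opposite

/-- `l(c) = a_J(y(c))` is compact in `Sh(C, J)` iff every `J`-covering sieve on `c`
contains a finite family of morphisms generating a `J`-covering sieve. -/
theorem compact_lc_iff (C : Type u) [SmallCategory C] (J : GrothendieckTopology C)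
    (c : C) :
    CompactObj ((yoneda ⋙ presheafToSheaf J (Type u)).obj c) ↔
      ∀ R ∈ J c, ∃ (ι : Type u) (_ : Finite ι) (X : ι → C) (f : ∀ i, X i ⟶ c),
        (∀ i, R (f i)) ∧ Sieve.generate (Presieve.ofArrows X f) ∈ J c := by
  constructor
  · intro hcomp R hR
    classical
    -- index: arrows of R
    let ι₁ : Type u := {p : Σ d : C, d ⟶ c // R p.2}
    let Y : ι₁ → Sheaf J (Type u) := fun p => lc J p.1.1
    let f : ∀ p : ι₁, Y p ⟶ lc J c :=
      fun p => (presheafToSheaf J (Type u)).map (yoneda.map p.1.2)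
    have hval : ∀ (p : ι₁) {d : C} (k : d ⟶ p.1.1) ,
        (f p).hom.app (op d) ((CategoryTheory.toSheafify J (yoneda.obj p.1.1)).app (op d) k)
          = (CategoryTheory.toSheafify J (yoneda.obj c)).app (op d) (k ≫ p.1.2) := by
      intro p d k
      have h1 := types_congr_hom (congrFun (congrArg NatTrans.app
        (CategoryTheory.toSheafify_naturality J (yoneda.map p.1.2))) (op d)) k
      simp only [NatTrans.comp_app, types_comp_apply] at h1
      exact h1.symm
    have hsub : R ≤ jointSieve J f := by
      intro d g hg
      refine ⟨⟨⟨d, g⟩, hg⟩, u0 J d, ?_⟩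
      rw [map_u0]
      have := hval ⟨⟨d, g⟩, hg⟩ (𝟙 d)
      simpa [u0] using this
    have hJE : JointlyEpic f := jointlyEpic_of_mem J f (J.superset_covering hsub hR)
    obtain ⟨s, hs⟩ := hcomp Y f hJE
    have hfin : jointSieve J (fun j : s => f j) ∈ J c :=
      mem_of_jointlyEpic J (fun j : s => f j) hs
    refine ⟨↥s, inferInstance, fun j => j.1.1.1, fun j => j.1.1.2, fun j => j.1.2, ?_⟩
    set gen := Sieve.generate (Presieve.ofArrows (fun j : s => j.1.1.1)
      (fun j : s => j.1.1.2)) with hgen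
    have hle : jointSieve J (fun j : s => f j) ≤ J.close gen := by
      rintro d g ⟨j, t, ht⟩
      show gen.pullback g ∈ J d
      have hT1 : Presheaf.imageSieve (CategoryTheory.toSheafify J (yoneda.obj j.1.1.1)) t ∈ J d :=
        Presheaf.imageSieve_mem J (CategoryTheory.toSheafify J (yoneda.obj j.1.1.1)) t
      refine J.transitive hT1 _ ?_
      rintro V h ⟨ψ, hψ⟩
      have hψ' : (CategoryTheory.toSheafify J (yoneda.obj j.1.1.1)).app (op V) ψ
          = (Y j.1).val.map h.op t := hψ
      have heq : (CategoryTheory.toSheafify J (yoneda.obj c)).app (op V) (h ≫ g)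
          = (CategoryTheory.toSheafify J (yoneda.obj c)).app (op V) (ψ ≫ j.1.1.2) := by
        rw [← map_u0, op_comp, FunctorToTypes.map_comp_apply, ← ht,
          ← FunctorToTypes.naturality, ← hψ']
        exact hval j ψ
      have hT2 := Presheaf.equalizerSieve_mem J (CategoryTheory.toSheafify J (yoneda.obj c)) _ _ heq
      refine J.superset_covering ?_ hT2
      rintro W k hk
      have hk' : k ≫ h ≫ g = k ≫ ψ ≫ j.1.1.2 := by
        simpa [Presheaf.equalizerSieve] using hk
      refine ⟨j.1.1.1, k ≫ ψ, j.1.1.2, Presieve.ofArrows.mk j, ?_⟩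
      rw [Category.assoc, ← hk', Category.assoc]
    have hclosemem : J.close gen ∈ J c := J.superset_covering hle hfin
    exact J.transitive hclosemem gen (fun Y f hf => hf)
  · intro hyp ι Y f hf
    classical
    have hR : jointSieve J f ∈ J c := mem_of_jointlyEpic J f hf
    obtain ⟨ι₀, hfinι, X, e, he, hgenmem⟩ := hyp _ hR
    choose idx t ht using he
    have hfin : (Set.range idx).Finite := Set.finite_range idx
    refine ⟨hfin.toFinset, ?_⟩
    apply jointlyEpic_of_mem
    refine J.superset_covering ?_ hgenmem
    rintro d g ⟨Z, k, m, hm, rfl⟩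
    cases hm with
    | mk i =>
      refine ⟨⟨idx i, by simp [Set.Finite.mem_toFinset]⟩, (Y (idx i)).val.map k.op (t i), ?_⟩
      rw [FunctorToTypes.naturality, ht i, ← FunctorToTypes.map_comp_apply, ← op_comp]
end

section
/- Let (C, J) be a small site. For an object c of C, the object l(c) = a_J(y(c)) of Sh(C, J) is supercompact if and only if every J-covering sieve on c contains a single morphism generating a J-covering sieve. -/
open CategoryTheory Limits

universe u

/-- An object is supercompact if every small jointly epimorphic family over it contains
an epimorphism. -/
def SupercompactObj {C : Type u} [SmallCategory C] {J : GrothendieckTopology C}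
    (A : Sheaf J (Type u)) : Prop :=
  ∀ ⦃ι : Type u⦄ (Y : ι → Sheaf J (Type u)) (f : ∀ i, Y i ⟶ A),
    JointlyEpic f → ∃ i, Epi (f i)

open Opposite

section Aux

variable {C : Type u} [SmallCategory C] (J : GrothendieckTopology C)


lemma ls_yoneda_map (d c : C) (g : d ⟶ c)
    (hg : Sieve.generate (Presieve.singleton g) ∈ J c) :
    Presheaf.IsLocallySurjective J (yoneda.map g) where
  imageSieve_mem {e} s := by
    have : Presheaf.imageSieve (yoneda.map g) s =
        (Sieve.generate (Presieve.singleton g)).pullback s := by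
      ext e' w
      constructor
      · rintro ⟨t, ht⟩
        exact ⟨d, t, g, Presieve.singleton.mk, ht⟩
      · rintro ⟨Z, k, l, hl, hkl⟩
        cases hl
        exact ⟨k, hkl⟩
    rw [this]
    exact J.pullback_stable _ hg

lemma epi_lc_iff {d c : C} (g : d ⟶ c) :
    Epi ((yoneda ⋙ presheafToSheaf J (Type u)).map g) ↔
      Sieve.generate (Presieve.singleton g) ∈ J c := by
  rw [← Sheaf.isLocallySurjective_iff_epi]
  have fac : toSheafify J (yoneda.obj d) ≫ ((presheafToSheaf J (Type u)).map (yoneda.map g)).hom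
      = yoneda.map g ≫ toSheafify J (yoneda.obj c) := (toSheafify_naturality J _).symm
  rw [show ((yoneda ⋙ presheafToSheaf J (Type u)).map g) = (presheafToSheaf J (Type u)).map (yoneda.map g) from rfl]
  dsimp only [Sheaf.IsLocallySurjective]
  rw [← Presheaf.isLocallySurjective_iff_of_fac J fac]
  constructor
  · intro hLS
    set η := toSheafify J (yoneda.obj c)
    have hmem := Presheaf.imageSieve_mem J (yoneda.map g ≫ η) (η.app (op c) (𝟙 c))
    refine J.transitive hmem _ ?_
    rintro e h ⟨t, ht⟩
    dsimp at ht
    have ht' : η.app (op e) (t ≫ g) = η.app (op e) h := by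
      have nat := ConcreteCategory.congr_hom (η.naturality h.op) (𝟙 c)
      dsimp at nat
      simpa using ht.trans nat.symm
    have := Presheaf.equalizerSieve_mem J η _ _ ht'
    refine J.superset_covering ?_ this
    intro e' w hw
    refine ⟨d, w ≫ t, g, Presieve.singleton.mk, ?_⟩
    simpa using hw
  · intro hg
    have := ls_yoneda_map J d c g hg
    infer_instance

/-- The union of the set-theoretic images of a family of sheaf morphisms. -/
def unionImage {ι : Type u} {A : Sheaf J (Type u)} (Y : ι → Sheaf J (Type u))
    (f : ∀ i, Y i ⟶ A) : Subfunctor A.val where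
  obj e := {s | ∃ (i : ι) (t : (Y i).val.obj e), (f i).hom.app e t = s}
  map := by
    rintro e e' u s ⟨i, t, rfl⟩
    exact ⟨i, (Y i).val.map u t, (ConcreteCategory.congr_hom ((f i).hom.naturality u) t)⟩

theorem supercompact_lc_iff_aux (c : C) :
    SupercompactObj ((yoneda ⋙ presheafToSheaf J (Type u)).obj c) ↔
      ∀ R ∈ J c, ∃ (d : C) (f : d ⟶ c),
        R f ∧ Sieve.generate (Presieve.singleton f) ∈ J c := by
  set L := yoneda ⋙ presheafToSheaf J (Type u) with hL
  set η : ∀ (e : C), yoneda.obj e ⟶ (L.obj e).val := fun e => toSheafify J (yoneda.obj e) with hη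
  have key : ∀ {e e' : C} (w : e' ⟶ e),
      (L.map w).hom.app (op e') ((η e').app (op e') (𝟙 e')) = (η e).app (op e') w := by
    intro e e' w
    have := ConcreteCategory.congr_hom (congr_app (toSheafify_naturality J (yoneda.map w)) (op e')) (𝟙 e')
    dsimp at this ⊢
    rw [Category.id_comp] at this
    exact this.symm
  constructor
  · -- forward
    intro hsc R hR
    have hje : JointlyEpic (fun i : (d : C) × {g : d ⟶ c // R g} => L.map i.2.1) := by
      intro Z g h hgh
      apply ((sheafificationAdjunction J (Type u)).homEquiv _ _).injective
      rw [Adjunction.homEquiv_unit, Adjunction.homEquiv_unit]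
      ext e (w : (e : Cᵒᵖ).unop ⟶ c)
      dsimp [sheafificationAdjunction_unit_app]
      induction e using Opposite.rec with | op e => ?_
      apply (Presieve.IsSheaf.isSeparated
        ((isSheaf_iff_isSheaf_of_type _ _).1 Z.cond) _ (J.pullback_stable w hR)).ext
      intro e' u hu
      have h1 : ∀ (k : L.obj c ⟶ Z),
          Z.val.map u.op (k.hom.app (op e) ((η c).app (op e) w))
            = k.hom.app (op e') ((η c).app (op e') (u ≫ w)) := by
        intro k
        have n1 := ConcreteCategory.congr_hom (k.hom.naturality u.op) ((η c).app (op e) w)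
        have n2 := ConcreteCategory.congr_hom ((η c).naturality u.op) w
        dsimp at n1 n2 ⊢
        rw [← n1, ← n2]
      rw [h1 g, h1 h]
      have := ConcreteCategory.congr_hom (congr_app (congr_arg InducedCategory.Hom.hom
        (hgh ⟨e', u ≫ w, hu⟩)) (op e')) ((η e').app (op e') (𝟙 e'))
      dsimp at this
      rw [key (u ≫ w)] at this
      exact this
    obtain ⟨i, hi⟩ := hsc (fun i : (d : C) × {g : d ⟶ c // R g} => L.obj i.1)
      (fun i => L.map i.2.1) hje
    exact ⟨i.1, i.2.1, i.2.2, (epi_lc_iff J _).1 hi⟩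
  · -- backward
    intro H ι Y f hje
    have hAs : Presieve.IsSheaf J (L.obj c).val := (isSheaf_iff_isSheaf_of_type _ _).1 (L.obj c).cond
    set U := unionImage J (A := L.obj c) Y f with hU
    set G := U.sheafify J with hG
    let GS : Sheaf J (Type u) := ⟨G.toFunctor, (isSheaf_iff_isSheaf_of_type _ _).2
      (U.sheafify_isSheaf hAs)⟩
    let ιh : GS ⟶ L.obj c := ⟨G.ι⟩
    have hmem : ∀ (i : ι) (e : Cᵒᵖ) (t : (Y i).val.obj e), (f i).hom.app e t ∈ G.obj e :=
      fun i e t => U.le_sheafify J e ⟨i, t, rfl⟩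
    have hfac : ∀ i, (⟨G.lift (f i).hom (by rintro e _ ⟨t, rfl⟩; exact hmem i e t)⟩ : Y i ⟶ GS) ≫ ιh = f i := by
      intro i
      apply InducedCategory.hom_ext
      exact G.lift_ι (f i).hom (by rintro e _ ⟨t, rfl⟩; exact hmem i e t)
    have hinl : pushout.inl ιh ιh = pushout.inr ιh ιh := by
      apply hje
      intro i
      rw [← hfac i, Category.assoc, Category.assoc, pushout.condition]
    have hepi : Epi ιh := by
      refine (epi_iff_inl_eq_inr (pushoutIsPushout ιh ιh)).2 ?_
      exact hinl
    have hls : Sheaf.IsLocallySurjective ιh := (Sheaf.isLocallySurjective_iff_epi _).2 hepi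
    -- the canonical section
    set s : (L.obj c).val.obj (op c) := (η c).app (op c) (𝟙 c) with hs
    have hAmap : ∀ {e : C} (w : e ⟶ c), (L.obj c).val.map w.op s = (η c).app (op e) w := by
      intro e w
      have := ConcreteCategory.congr_hom ((η c).naturality w.op) (𝟙 c)
      dsimp at this
      simpa using this.symm
    have h1 : Presheaf.imageSieve G.ι s ∈ J c := Presheaf.imageSieve_mem J ιh.hom s
    have h2 : Presheaf.imageSieve G.ι s = G.sieveOfSection s := by
      ext e w
      constructor
      · rintro ⟨⟨t, htG⟩, ht⟩
        show (L.obj c).val.map w.op s ∈ G.obj (op e)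
        exact (show t = (L.obj c).val.map w.op s from ht) ▸ htG
      · intro hw
        exact ⟨⟨_, hw⟩, rfl⟩
    have hR : U.sieveOfSection s ∈ J c := by
      refine J.transitive (h2 ▸ h1) _ ?_
      intro e w hw
      have : U.sieveOfSection ((L.obj c).val.map w.op s) = (U.sieveOfSection s).pullback w := by
        ext e' v
        show (L.obj c).val.map v.op ((L.obj c).val.map w.op s) ∈ _ ↔
          (L.obj c).val.map (v ≫ w).op s ∈ _
        rw [op_comp, FunctorToTypes.map_comp_apply]
      rw [← this]
      exact hw
    obtain ⟨d, g, hg, hgen⟩ := H _ hR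
    obtain ⟨i, t, ht⟩ := hg
    rw [hAmap g] at ht
    -- build the factorization
    set θ : L.obj d ⟶ Y i :=
      ((sheafificationAdjunction J (Type u)).homEquiv (yoneda.obj d) (Y i)).symm
        (yonedaEquiv.symm t) with hθ
    have hθfac : θ ≫ f i = L.map g := by
      apply ((sheafificationAdjunction J (Type u)).homEquiv _ _).injective
      rw [Adjunction.homEquiv_naturality_right, Equiv.apply_symm_apply,
        Adjunction.homEquiv_unit]
      rw [show ((sheafificationAdjunction J (Type u)).unit.app (yoneda.obj d)) =
        toSheafify J (yoneda.obj d) from rfl]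
      rw [show (sheafToPresheaf J (Type u)).map (L.map g) =
        ((presheafToSheaf J (Type u)).map (yoneda.map g)).hom from rfl]
      rw [← toSheafify_naturality]
      apply yonedaEquiv.injective
      rw [yonedaEquiv_comp, yonedaEquiv_comp, Equiv.apply_symm_apply, yonedaEquiv_yoneda_map]
      exact ht
    have : Epi (L.map g) := (epi_lc_iff J g).2 hgen
    exact ⟨i, epi_of_epi_fac hθfac⟩

end Aux

/-- `l(c) = a_J(y(c))` is supercompact in `Sh(C, J)` iff every `J`-covering sieve on `c`
contains a single morphism generating a `J`-covering sieve. -/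
theorem supercompact_lc_iff (C : Type u) [SmallCategory C] (J : GrothendieckTopology C)
    (c : C) :
    SupercompactObj ((yoneda ⋙ presheafToSheaf J (Type u)).obj c) ↔
      ∀ R ∈ J c, ∃ (d : C) (f : d ⟶ c),
        R f ∧ Sieve.generate (Presieve.singleton f) ∈ J c :=
  supercompact_lc_iff_aux J c
end

section
/- Let (C, J) be a rigid small site, and let D be the full subcategory of C on the J-irreducible objects. Then the sheaf topos Sh(C, J) is equivalent to the presheaf topos [D^op, Set]. -/
open CategoryTheory Limits

universe u

variable {C : Type u} [SmallCategory C]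

/-- An object `c` is `J`-irreducible if the only `J`-covering sieve on `c` is the
maximal sieve. -/
def JIrreducible (J : GrothendieckTopology C) (c : C) : Prop :=
  ∀ R : Sieve c, R ∈ J c → R = ⊤

/-- The presieve on `c` of all morphisms whose domain is `J`-irreducible. -/
def fromIrreducibles (J : GrothendieckTopology C) (c : C) : Presieve c :=
  fun b _ => JIrreducible J b

/-- If `(C, J)` is a rigid site (for every `c`, the family of all morphisms from
`J`-irreducible objects to `c` generates a `J`-covering sieve), then `Sh(C, J)` is
equivalent to presheaves on the full subcategory `D` of `J`-irreducible objects. -/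
theorem rigid_site_sheaves_equiv_presheaves (J : GrothendieckTopology C)
    (hrigid : ∀ c : C, Sieve.generate (fromIrreducibles J c) ∈ J c) :
    Nonempty (Sheaf J (Type u) ≌
      ((ObjectProperty.FullSubcategory fun c : C => JIrreducible J c)ᵒᵖ ⥤ Type u)) := by
  let G := ObjectProperty.ι fun c : C => JIrreducible J c
  have hcd : G.IsCoverDense J := by
    constructor
    intro U
    refine J.superset_covering ?_ (hrigid U)
    rintro Y f ⟨Z, g, h, hh, rfl⟩
    exact ⟨⟨⟨Z, hh⟩, g, h, rfl⟩⟩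
  haveI : G.IsDenseSubsite (⊥ : GrothendieckTopology _) J := by
    refine ⟨hcd, inferInstance, inferInstance, ?_⟩
    intro X S
    rw [GrothendieckTopology.bot_covering]
    constructor
    · intro hS
      have : Sieve.functorPushforward G S = ⊤ := X.2 _ hS
      have h1 : Sieve.functorPushforward G S (𝟙 (G.obj X)) := by simp [this]
      obtain ⟨Z, f, g, hf, hfac⟩ := h1
      obtain ⟨g', rfl⟩ := G.map_surjective g
      have : G.map (g' ≫ f) = G.map (𝟙 X) := by simpa using hfac.symm
      have := G.map_injective this
      rw [← Sieve.id_mem_iff_eq_top, ← this]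
      exact S.downward_closed hf g'
    · rintro rfl
      have : Sieve.functorPushforward G (⊤ : Sieve X) = ⊤ := by
        rw [← Sieve.id_mem_iff_eq_top]
        exact ⟨X, 𝟙 X, 𝟙 _, trivial, by simp⟩
      rw [this]
      exact J.top_mem _
  exact ⟨((Functor.IsDenseSubsite.sheafEquiv (G := G) (J := (⊥ : GrothendieckTopology _)) (K := J)
    (A := Type u)).symm.trans (sheafBotEquivalence _))⟩
end

section
/- Let C be a small category with a Grothendieck topology J such that every J-covering sieve is connected (i.e., the site (C, J) is locally connected; in particular every covering sieve is nonempty). Then for every object c of C, the constant presheaf functor applied pointwise shows: the sheafification l(c) = a_J(y(c)) is an indecomposable object of Sh(C, J). -/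
open CategoryTheory Limits

universe u

variable {C : Type u} [SmallCategory C]

/-- A sieve `R` on `c` is connected if, viewed as a full subcategory of the slice
category `C/c`, it is a connected (in particular nonempty) category. -/
def ConnectedSieve {c : C} (R : Sieve c) : Prop :=
  IsConnected (ObjectProperty.FullSubcategory fun g : Over c => R g.hom)

/-- A site `(C, J)` is locally connected if every `J`-covering sieve is connected. -/
def LocallyConnectedSite (J : GrothendieckTopology C) : Prop :=
  ∀ ⦃c : C⦄ (R : Sieve c), R ∈ J c → ConnectedSieve R

/-- An object is indecomposable if it has no nontrivial coproduct decomposition. -/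
def IsIndecomposableObj {E : Type*} [Category E] (A : E) : Prop :=
  ∀ ⦃B C : E⦄ (f : B ⟶ A) (g : C ⟶ A), Nonempty (IsColimit (BinaryCofan.mk f g)) →
    Nonempty (IsInitial B) ∨ Nonempty (IsInitial C)

/-- The pointwise sum of two presheaves of types. -/
def sumPresheaf (P Q : Cᵒᵖ ⥤ Type u) : Cᵒᵖ ⥤ Type u where
  obj d := P.obj d ⊕ Q.obj d
  map f := TypeCat.ofHom (Sum.map (P.map f) (Q.map f))
  map_id d := by ext z; cases z <;> simp
  map_comp f g := by ext z; cases z <;> simp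

/-- Over a locally connected site, the pointwise sum of two sheaves is a sheaf. -/
theorem sumPresheaf_isSheaf (J : GrothendieckTopology C) (hJ : LocallyConnectedSite J)
    (B D : Sheaf J (Type u)) : Presheaf.IsSheaf J (sumPresheaf B.val D.val) := by
  rw [isSheaf_iff_isSheaf_of_type]
  intro d S hS x hx
  have hB := (isSheaf_iff_isSheaf_of_type J B.val).mp B.cond S hS
  have hD := (isSheaf_iff_isSheaf_of_type J D.val).mp D.cond S hS
  have hconn : IsConnected (ObjectProperty.FullSubcategory fun g : Over d => S g.hom) := hJ S hS
  -- the side (left or right) of the values of `x` is constant over the (connected) sieve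
  have hconst : ∀ k k' : ObjectProperty.FullSubcategory fun g : Over d => S g.hom,
      (x k.obj.hom k.property).isLeft = (x k'.obj.hom k'.property).isLeft := by
    apply constant_of_preserves_morphisms
    intro k₁ k₂ m
    have h' := hx (𝟙 k₁.obj.left) m.hom.left k₁.property k₂.property (by simp [Over.w m.hom])
    rw [op_id, FunctorToTypes.map_id_apply] at h'
    rw [h']
    rcases hy : x k₂.obj.hom k₂.property with a | a <;> rfl
  obtain ⟨k₀⟩ : Nonempty (ObjectProperty.FullSubcategory fun g : Over d => S g.hom) := hconn.is_nonempty
  by_cases hside : (x k₀.obj.hom k₀.property).isLeft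
  · -- all values lie in the left summand
    have hall : ∀ ⦃Y⦄ (f : Y ⟶ d) (hf : S f), (x f hf).isLeft := fun Y f hf =>
      (hconst ⟨Over.mk f, hf⟩ k₀).trans hside
    let xB : Presieve.FamilyOfElements B.val (S : Presieve d) :=
      fun Y f hf => (x f hf).getLeft (hall f hf)
    have hxB : xB.Compatible := by
      intro Y₁ Y₂ Z g₁ g₂ f₁ f₂ h₁ h₂ hcomm
      have h' := hx g₁ g₂ h₁ h₂ hcomm
      rw [← Sum.inl_getLeft (x f₁ h₁) (hall f₁ h₁), ← Sum.inl_getLeft (x f₂ h₂) (hall f₂ h₂)]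
        at h'
      exact Sum.inl.inj h'
    obtain ⟨t, ht, htu⟩ := hB xB hxB
    refine ⟨Sum.inl t, fun Y f hf => ?_, fun t' ht' => ?_⟩
    · show Sum.inl (B.val.map f.op t) = x f hf
      rw [ht f hf]
      exact Sum.inl_getLeft _ _
    · rcases t' with b' | c'
      · have hamal : xB.IsAmalgamation b' := by
          intro Y f hf
          have h' := ht' f hf
          rw [← Sum.inl_getLeft (x f hf) (hall f hf)] at h'
          exact Sum.inl.inj h'
        rw [htu b' hamal]
      · exfalso
        have h' : Sum.inr (D.val.map (k₀.obj.hom).op c') = x k₀.obj.hom k₀.property :=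
          ht' k₀.obj.hom k₀.property
        rw [← h'] at hside
        exact Bool.noConfusion hside
  · -- all values lie in the right summand
    have hall : ∀ ⦃Y⦄ (f : Y ⟶ d) (hf : S f), (x f hf).isRight := by
      intro Y f hf
      have h' : (x f hf).isLeft = (x k₀.obj.hom k₀.property).isLeft :=
        hconst ⟨Over.mk f, hf⟩ k₀
      rcases hy : x f hf with a | a
      · rw [hy] at h'
        exact absurd h'.symm hside
      · rfl
    let xD : Presieve.FamilyOfElements D.val (S : Presieve d) :=
      fun Y f hf => (x f hf).getRight (hall f hf)
    have hxD : xD.Compatible := by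
      intro Y₁ Y₂ Z g₁ g₂ f₁ f₂ h₁ h₂ hcomm
      have h' := hx g₁ g₂ h₁ h₂ hcomm
      rw [← Sum.inr_getRight (x f₁ h₁) (hall f₁ h₁), ← Sum.inr_getRight (x f₂ h₂) (hall f₂ h₂)]
        at h'
      exact Sum.inr.inj h'
    obtain ⟨t, ht, htu⟩ := hD xD hxD
    refine ⟨Sum.inr t, fun Y f hf => ?_, fun t' ht' => ?_⟩
    · show Sum.inr (D.val.map f.op t) = x f hf
      rw [ht f hf]
      exact Sum.inr_getRight _ _
    · rcases t' with b' | c'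
      · exfalso
        have h' : Sum.inl (B.val.map (k₀.obj.hom).op b') = x k₀.obj.hom k₀.property :=
          ht' k₀.obj.hom k₀.property
        apply hside
        rw [← h']
        rfl
      · have hamal : xD.IsAmalgamation c' := by
          intro Y f hf
          have h' := ht' f hf
          rw [← Sum.inr_getRight (x f hf) (hall f hf)] at h'
          exact Sum.inr.inj h'
        rw [htu c' hamal]

/-- The sum sheaf of two sheaves over a locally connected site. -/
def sumSheaf (J : GrothendieckTopology C) (hJ : LocallyConnectedSite J)
    (B D : Sheaf J (Type u)) : Sheaf J (Type u) :=
  ⟨sumPresheaf B.val D.val, sumPresheaf_isSheaf J hJ B D⟩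

/-- The left inclusion into the sum sheaf. -/
def sumSheafInl (J : GrothendieckTopology C) (hJ : LocallyConnectedSite J)
    (B D : Sheaf J (Type u)) : B ⟶ sumSheaf J hJ B D :=
  ⟨{ app := fun _ => TypeCat.ofHom Sum.inl, naturality := fun _ _ _ => rfl }⟩

/-- The right inclusion into the sum sheaf. -/
def sumSheafInr (J : GrothendieckTopology C) (hJ : LocallyConnectedSite J)
    (B D : Sheaf J (Type u)) : D ⟶ sumSheaf J hJ B D :=
  ⟨{ app := fun _ => TypeCat.ofHom Sum.inr, naturality := fun _ _ _ => rfl }⟩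

/-- The sum sheaf is a binary coproduct of the two sheaves. -/
noncomputable def sumSheafIsColimit (J : GrothendieckTopology C) (hJ : LocallyConnectedSite J)
    (B D : Sheaf J (Type u)) :
    IsColimit (BinaryCofan.mk (sumSheafInl J hJ B D) (sumSheafInr J hJ B D)) := by
  refine BinaryCofan.IsColimit.mk _ (fun {T} p q => ⟨{
      app := fun e => TypeCat.ofHom (Sum.elim (p.hom.app e) (q.hom.app e))
      naturality := ?_ }⟩) ?_ ?_ ?_
  · intro e e' φ
    ext z
    rcases z with b | cc
    · exact ConcreteCategory.congr_hom (p.hom.naturality φ) b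
    · exact ConcreteCategory.congr_hom (q.hom.naturality φ) cc
  · intro T p q
    exact Sheaf.hom_ext (by ext e b; rfl)
  · intro T p q
    exact Sheaf.hom_ext (by ext e cc; rfl)
  · intro T p q m hp hq
    refine Sheaf.hom_ext ?_
    ext e z
    rcases z with b | cc
    · exact congrArg (fun n => n.hom.app e b) hp
    · exact congrArg (fun n => n.hom.app e cc) hq

/-- If every `J`-covering sieve is connected (the site is locally connected), then for
every object `c`, the sheafification `l(c) = a_J(y(c))` is indecomposable in
`Sh(C, J)`. -/
theorem lc_indecomposable_of_locally_connected_site (J : GrothendieckTopology C)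
    (hJ : LocallyConnectedSite J) (c : C) :
    IsIndecomposableObj ((yoneda ⋙ presheafToSheaf J (Type u)).obj c) := by
  intro B D f g ⟨hcolim⟩
  -- the equivalence `Hom(l c, X) ≃ X(c)`
  let Φ : ∀ X : Sheaf J (Type u),
      ((yoneda ⋙ presheafToSheaf J (Type u)).obj c ⟶ X) ≃ X.val.obj (Opposite.op c) :=
    fun X => ((sheafificationAdjunction J (Type u)).homEquiv (yoneda.obj c) X).trans yonedaEquiv
  have hΦ : ∀ (X Y : Sheaf J (Type u)) (k : (yoneda ⋙ presheafToSheaf J (Type u)).obj c ⟶ X)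
      (m : X ⟶ Y), Φ Y (k ≫ m) = m.hom.app (Opposite.op c) (Φ X k) := by
    intro X Y k m
    show yonedaEquiv (((sheafificationAdjunction J (Type u)).homEquiv _ _) (k ≫ m)) = _
    rw [Adjunction.homEquiv_naturality_right]
    exact yonedaEquiv_comp _ _
  -- compare the given cofan with the explicit sum cofan
  let hsum := sumSheafIsColimit J hJ B D
  let e := hcolim.coconePointUniqueUpToIso hsum
  have hf : f ≫ e.hom = sumSheafInl J hJ B D :=
    hcolim.comp_coconePointUniqueUpToIso_hom hsum ⟨WalkingPair.left⟩
  have hg : g ≫ e.hom = sumSheafInr J hJ B D :=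
    hcolim.comp_coconePointUniqueUpToIso_hom hsum ⟨WalkingPair.right⟩
  rcases hx : Φ (sumSheaf J hJ B D) e.hom with b | dd
  · -- `e.hom` factors through `B`; then `D` has empty sections, hence is initial
    right
    have hfac : (Φ B).symm b ≫ sumSheafInl J hJ B D = e.hom := by
      apply (Φ (sumSheaf J hJ B D)).injective
      rw [hΦ B _ ((Φ B).symm b) (sumSheafInl J hJ B D), Equiv.apply_symm_apply, hx]
      rfl
    have hempty : ∀ e' : Cᵒᵖ, IsEmpty (D.val.obj e') := by
      intro e'
      constructor
      intro z
      have h1 : g ≫ e.hom = g ≫ (Φ B).symm b ≫ sumSheafInl J hJ B D := by rw [hfac]; rfl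
      rw [hg] at h1
      have h2 := congrArg (fun n => n.hom.app e' z) h1
      exact Sum.inr_ne_inl h2
    refine ⟨IsInitial.ofUniqueHom (fun Y => ⟨{
        app := fun e' => TypeCat.ofHom fun z => (hempty e').elim z
        naturality := fun e₁ e₂ φ => by ext z; exact (hempty e₁).elim z }⟩) ?_⟩
    intro Y m
    refine Sheaf.hom_ext ?_
    ext e' z
    exact (hempty e').elim z
  · -- `e.hom` factors through `D`; then `B` has empty sections, hence is initial
    left
    have hfac : (Φ D).symm dd ≫ sumSheafInr J hJ B D = e.hom := by
      apply (Φ (sumSheaf J hJ B D)).injective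
      rw [hΦ D _ ((Φ D).symm dd) (sumSheafInr J hJ B D), Equiv.apply_symm_apply, hx]
      rfl
    have hempty : ∀ e' : Cᵒᵖ, IsEmpty (B.val.obj e') := by
      intro e'
      constructor
      intro z
      have h1 : f ≫ e.hom = f ≫ (Φ D).symm dd ≫ sumSheafInr J hJ B D := by rw [hfac]; rfl
      rw [hf] at h1
      have h2 := congrArg (fun n => n.hom.app e' z) h1
      exact Sum.inl_ne_inr h2
    refine ⟨IsInitial.ofUniqueHom (fun Y => ⟨{
        app := fun e' => TypeCat.ofHom fun z => (hempty e').elim z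
        naturality := fun e₁ e₂ φ => by ext z; exact (hempty e₁).elim z }⟩) ?_⟩
    intro Y m
    refine Sheaf.hom_ext ?_
    ext e' z
    exact (hempty e').elim z
end
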